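/- arXiv:0711.0451 — 2 statements merged into one kernel-verified Lean document; each statement's English description precedes it below -/
import Mathlib

section
/- Let f ∈ L_p[0,1] (1 ≤ p < ∞) be self-similar of zero spectral order with 1 < k̂ < n, and assume f is not almost everywhere equal to a constant. Then f coincides almost everywhere with a nondecreasing function on [0,1] if and only if d_{k̂} > 0 and β_1 ≤ β_2 ≤ … ≤ β_{k̂−1} ≤ d_{k̂}β_1 + β_{k̂} ≤ d_{k̂}β_n + β_{k̂} ≤ β_{k̂+1} ≤ … ≤ β_n. -/
open MeasureTheory Set Filter
open scoped ENNReal NNReal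

/-- Breakpoints: `alphaOf a k = α_k = ∑_{i=1}^{k-1} a_i`, so `α_1 = 0`. -/
noncomputable def alphaOf (a : ℕ → ℝ) (k : ℕ) : ℝ := ∑ i ∈ Finset.Ico 1 k, a i

/-- The similarity operator `G`: on `(α_k, α_{k+1})` it takes the value
`β_k + d_k · f((x − α_k)/a_k)`, and `0` outside `⋃ (α_k, α_{k+1})`. -/
noncomputable def simOp (n : ℕ) (a d β : ℕ → ℝ) (f : ℝ → ℝ) : ℝ → ℝ :=
  fun x => ∑ k ∈ Finset.Icc 1 n,
    Set.indicator (Set.Ioo (alphaOf a k) (alphaOf a (k + 1)))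
      (fun y => β k + d k * f ((y - alphaOf a k) / a k)) x

namespace SelfSim

/-- the affine contraction onto the `khat` interval -/
noncomputable def T (c A : ℝ) (x : ℝ) : ℝ := c + A * x

/-- accumulated shift -/
noncomputable def Sc (bk dk : ℝ) : ℕ → ℝ
  | 0 => 0
  | m + 1 => bk + dk * Sc bk dk m

/-- value of the self-similar step function on piece `(m, j)` -/
noncomputable def V (bk dk : ℝ) (β : ℕ → ℝ) (m j : ℕ) : ℝ := Sc bk dk m + dk ^ m * β j

/-- piece `(m, j)` -/
noncomputable def piece (a : ℕ → ℝ) (khat : ℕ) (m j : ℕ) : Set ℝ :=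
  Set.Ioo ((T (alphaOf a khat) (a khat))^[m] (alphaOf a j))
    ((T (alphaOf a khat) (a khat))^[m] (alphaOf a (j + 1)))

section Basic

variable {n khat : ℕ} {a d β : ℕ → ℝ}

lemma alpha_one (a : ℕ → ℝ) : alphaOf a 1 = 0 := by
  simp [alphaOf]

lemma alpha_succ (a : ℕ → ℝ) {k : ℕ} (hk : 1 ≤ k) :
    alphaOf a (k + 1) = alphaOf a k + a k := by
  simp [alphaOf, Finset.sum_Ico_succ_top hk]

lemma alpha_mono (ha : ∀ k ∈ Finset.Icc 1 n, 0 < a k) {k l : ℕ}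
    (hk : 1 ≤ k) (hkl : k ≤ l) (hl : l ≤ n + 1) : alphaOf a k ≤ alphaOf a l := by
  have h : alphaOf a k + ∑ i ∈ Finset.Ico k l, a i = alphaOf a l := by
    rw [alphaOf, alphaOf, Finset.sum_Ico_consecutive _ hk hkl]
  have hpos : 0 ≤ ∑ i ∈ Finset.Ico k l, a i := by
    refine Finset.sum_nonneg fun i hi => ?_
    rw [Finset.mem_Ico] at hi
    exact (ha i (Finset.mem_Icc.2 ⟨le_trans hk hi.1, by omega⟩)).le
  linarith

lemma alpha_strict (ha : ∀ k ∈ Finset.Icc 1 n, 0 < a k) {k l : ℕ}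
    (hk : 1 ≤ k) (hkl : k < l) (hl : l ≤ n + 1) : alphaOf a k < alphaOf a l := by
  have h1 : alphaOf a k + a k = alphaOf a (k + 1) := (alpha_succ a hk).symm
  have h2 : alphaOf a (k + 1) ≤ alphaOf a l := alpha_mono ha (by omega) (by omega) hl
  have h3 : 0 < a k := ha k (Finset.mem_Icc.2 ⟨hk, by omega⟩)
  linarith

lemma alpha_top (hsum : ∑ k ∈ Finset.Icc 1 n, a k = 1) : alphaOf a (n + 1) = 1 := by
  rw [alphaOf, ← Finset.Ico_add_one_right_eq_Icc] at *
  exact hsum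

lemma alpha_nonneg (ha : ∀ k ∈ Finset.Icc 1 n, 0 < a k) {k : ℕ} (hk : 1 ≤ k) (hkn : k ≤ n + 1) :
    0 ≤ alphaOf a k := by
  rw [← alpha_one a]; exact alpha_mono ha le_rfl hk hkn

lemma alpha_le_one (ha : ∀ k ∈ Finset.Icc 1 n, 0 < a k)
    (hsum : ∑ k ∈ Finset.Icc 1 n, a k = 1) {k : ℕ} (hk : 1 ≤ k) (hkn : k ≤ n + 1) :
    alphaOf a k ≤ 1 := by
  rw [← alpha_top hsum]; exact alpha_mono ha hk hkn le_rfl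

end Basic

section Tlem

variable {c A : ℝ}

lemma T_mono (hA : 0 < A) : StrictMono (T c A) := fun x y h => by
  simp only [T]; nlinarith

lemma T_iter_mono (hA : 0 < A) (m : ℕ) : StrictMono ((T c A)^[m]) :=
  (T_mono hA).iterate m

lemma T_iter_sub (m : ℕ) (x y : ℝ) :
    (T c A)^[m] x - (T c A)^[m] y = A ^ m * (x - y) := by
  induction m with
  | zero => simp
  | succ m ih =>
    rw [Function.iterate_succ_apply', Function.iterate_succ_apply']
    simp only [T]
    rw [pow_succ']
    have : A * ((T c A)^[m] x - (T c A)^[m] y) = A * (A ^ m * (x - y)) := by rw [ih]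
    linarith [this]

lemma T_iter_mem (hA : 0 < A) (hc : 0 ≤ c) (hca : c + A ≤ 1) (m : ℕ) {x : ℝ}
    (hx : x ∈ Set.Icc (0:ℝ) 1) : (T c A)^[m] x ∈ Set.Icc (0:ℝ) 1 := by
  induction m with
  | zero => simpa
  | succ m ih =>
    rw [Function.iterate_succ_apply']
    obtain ⟨h0, h1⟩ := ih
    constructor
    · simp only [T]; nlinarith
    · simp only [T]; nlinarith

end Tlem


section Pieces

variable {n khat : ℕ} {a d β : ℕ → ℝ}

lemma piece_zero (a : ℕ → ℝ) (khat j : ℕ) :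
    SelfSim.piece a khat 0 j = Set.Ioo (alphaOf a j) (alphaOf a (j + 1)) := by
  simp [piece]

lemma V_zero (bk dk : ℝ) (β : ℕ → ℝ) (j : ℕ) : V bk dk β 0 j = β j := by
  simp [V, Sc]

lemma V_succ (bk dk : ℝ) (β : ℕ → ℝ) (m j : ℕ) :
    V bk dk β (m + 1) j = bk + dk * V bk dk β m j := by
  simp only [V, Sc, pow_succ]
  ring

section withHyp

variable (ha : ∀ k ∈ Finset.Icc 1 n, 0 < a k) (hsum : ∑ k ∈ Finset.Icc 1 n, a k = 1)
  (hk1 : 1 < khat) (hkn : khat < n)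

include ha hsum hk1 hkn

lemma cA_facts : 0 < a khat ∧ 0 ≤ alphaOf a khat ∧
    alphaOf a khat + a khat = alphaOf a (khat + 1) ∧ alphaOf a (khat + 1) ≤ 1 := by
  refine ⟨ha khat (Finset.mem_Icc.2 ⟨by omega, by omega⟩),
    alpha_nonneg ha (by omega) (by omega), (alpha_succ a (by omega)).symm,
    alpha_le_one ha hsum (by omega) (by omega)⟩

lemma piece_subset_unit {m j : ℕ} (hj : 1 ≤ j) (hjn : j ≤ n) :
    SelfSim.piece a khat m j ⊆ Set.Icc (0:ℝ) 1 := by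
  obtain ⟨hA, hc, hca, h1⟩ := cA_facts ha hsum hk1 hkn
  intro x hx
  obtain ⟨hx1, hx2⟩ := hx
  have hl := T_iter_mem hA hc (by linarith) m
    (x := alphaOf a j) ⟨alpha_nonneg ha hj (by omega), alpha_le_one ha hsum hj (by omega)⟩
  have hr := T_iter_mem hA hc (by linarith) m
    (x := alphaOf a (j+1)) ⟨alpha_nonneg ha (by omega) (by omega),
      alpha_le_one ha hsum (by omega) (by omega)⟩
  exact ⟨le_trans hl.1 hx1.le, le_trans hx2.le hr.2⟩

lemma piece_succ_subset {m j : ℕ} (hj : 1 ≤ j) (hjn : j ≤ n) :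
    SelfSim.piece a khat (m + 1) j ⊆ Set.Ioo (alphaOf a khat) (alphaOf a (khat + 1)) := by
  obtain ⟨hA, hc, hca, h1⟩ := cA_facts ha hsum hk1 hkn
  intro x hx
  obtain ⟨hx1, hx2⟩ := hx
  rw [Function.iterate_succ_apply'] at hx1 hx2
  have hl := T_iter_mem hA hc (by linarith) m
    (x := alphaOf a j) ⟨alpha_nonneg ha hj (by omega), alpha_le_one ha hsum hj (by omega)⟩
  have hr := T_iter_mem hA hc (by linarith) m
    (x := alphaOf a (j+1)) ⟨alpha_nonneg ha (by omega) (by omega),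
      alpha_le_one ha hsum (by omega) (by omega)⟩
  constructor
  · have : alphaOf a khat ≤ T (alphaOf a khat) (a khat) ((T (alphaOf a khat) (a khat))^[m] (alphaOf a j)) := by
      simp only [T]; nlinarith [hl.1]
    linarith
  · have : T (alphaOf a khat) (a khat) ((T (alphaOf a khat) (a khat))^[m] (alphaOf a (j+1))) ≤ alphaOf a (khat+1) := by
      simp only [T]; nlinarith [hr.2]
    linarith

lemma mem_piece_succ {m j : ℕ} {x : ℝ} (hx : x ∈ SelfSim.piece a khat (m + 1) j) :
    (x - alphaOf a khat) / a khat ∈ SelfSim.piece a khat m j := by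
  obtain ⟨hA, hc, hca, h1⟩ := cA_facts ha hsum hk1 hkn
  obtain ⟨hx1, hx2⟩ := hx
  rw [Function.iterate_succ_apply'] at hx1 hx2
  simp only [T] at hx1 hx2
  constructor
  · rw [lt_div_iff₀ hA]; linarith
  · rw [div_lt_iff₀ hA]; linarith

end withHyp

section Order

variable (hk1 : 1 < khat) (hkn : khat < n)
variable (H2 : ∀ i : ℕ, 1 ≤ i → i + 1 ≤ khat - 1 → β i ≤ β (i + 1))
variable (H3 : β (khat - 1) ≤ d khat * β 1 + β khat)
variable (H4 : d khat * β 1 + β khat ≤ d khat * β n + β khat)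
variable (H5 : d khat * β n + β khat ≤ β (khat + 1))
variable (H6 : ∀ i : ℕ, khat + 1 ≤ i → i + 1 ≤ n → β i ≤ β (i + 1))

include H2 in
lemma chain_low {i j : ℕ} (h1 : 1 ≤ i) (hij : i ≤ j) (hj : j ≤ khat - 1) : β i ≤ β j := by
  induction j, hij using Nat.le_induction with
  | base => exact le_rfl
  | succ j hij ih => exact le_trans (ih (by omega)) (H2 j (by omega) (by omega))

include H6 in
lemma chain_up {i j : ℕ} (h1 : khat + 1 ≤ i) (hij : i ≤ j) (hj : j ≤ n) : β i ≤ β j := by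
  induction j, hij using Nat.le_induction with
  | base => exact le_rfl
  | succ j hij ih => exact le_trans (ih (by omega)) (H6 j (by omega) (by omega))

include hk1 hkn H2 H3 H4 H5 H6 in
lemma chain {i j : ℕ} (h1 : 1 ≤ i) (hij : i ≤ j) (hj : j ≤ n)
    (hik : i ≠ khat) (hjk : j ≠ khat) : β i ≤ β j := by
  rcases lt_or_gt_of_ne hjk with hjlt | hjgt
  · exact chain_low H2 h1 hij (by omega)
  · rcases lt_or_gt_of_ne hik with hilt | higt
    · have h1' : β i ≤ β (khat - 1) := chain_low H2 h1 (by omega) (by omega)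
      have h2' : β (khat + 1) ≤ β j := chain_up H6 (by omega) (by omega) hj
      linarith
    · exact chain_up H6 (by omega) hij hj

variable (hd : 0 < d khat)

include hk1 hkn H2 H3 H4 H5 H6 hd in
lemma V_bound : ∀ m, ∀ j : ℕ, 1 ≤ j → j ≤ n → j ≠ khat →
    β 1 ≤ V (β khat) (d khat) β m j ∧ V (β khat) (d khat) β m j ≤ β n := by
  intro m
  induction m with
  | zero =>
    intro j hj hjn hjk
    rw [V_zero]
    exact ⟨chain hk1 hkn H2 H3 H4 H5 H6 le_rfl hj hjn (by omega) hjk,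
      chain hk1 hkn H2 H3 H4 H5 H6 hj hjn le_rfl hjk (by omega)⟩
  | succ m ih =>
    intro j hj hjn hjk
    obtain ⟨hl, hu⟩ := ih j hj hjn hjk
    rw [V_succ]
    have hbl : β 1 ≤ β (khat - 1) := chain_low H2 le_rfl (by omega) le_rfl
    have hbu : β (khat + 1) ≤ β n := chain_up H6 le_rfl (by omega) (by omega)
    have h1 : d khat * β 1 ≤ d khat * V (β khat) (d khat) β m j :=
      mul_le_mul_of_nonneg_left hl hd.le
    have h2 : d khat * V (β khat) (d khat) β m j ≤ d khat * β n :=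
      mul_le_mul_of_nonneg_left hu hd.le
    constructor <;> linarith

variable (ha : ∀ k ∈ Finset.Icc 1 n, 0 < a k) (hsum : ∑ k ∈ Finset.Icc 1 n, a k = 1)

include hk1 hkn H2 H3 H4 H5 H6 hd ha hsum in
lemma key_mono : ∀ m l j i : ℕ, 1 ≤ j → j ≤ n → j ≠ khat → 1 ≤ i → i ≤ n → i ≠ khat →
    ∀ x ∈ SelfSim.piece a khat m j, ∀ y ∈ SelfSim.piece a khat l i, y ≤ x →
    V (β khat) (d khat) β l i ≤ V (β khat) (d khat) β m j := by
  intro m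
  induction m with
  | zero =>
    intro l j i hj hjn hjk hi hin hik x hx y hy hyx
    rw [piece_zero] at hx
    cases l with
    | zero =>
      rw [piece_zero] at hy
      have hij : i ≤ j := by
        by_contra hc
        have : alphaOf a (j+1) ≤ alphaOf a i := alpha_mono ha (by omega) (by omega) (by omega)
        have := hy.1; have := hx.2; linarith
      rw [V_zero, V_zero]
      exact chain hk1 hkn H2 H3 H4 H5 H6 hi hij hjn hik hjk
    | succ l =>
      have hy' := piece_succ_subset ha hsum hk1 hkn hi hin hy
      have hkj : khat + 1 ≤ j := by
        by_contra hc
        have hjkh : j + 1 ≤ khat := by omega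
        have : alphaOf a (j+1) ≤ alphaOf a khat := alpha_mono ha (by omega) hjkh (by omega)
        have := hy'.1; have := hx.2; linarith
      rw [V_succ, V_zero]
      have hu := (V_bound hk1 hkn H2 H3 H4 H5 H6 hd l i hi hin hik).2
      have hbu : β (khat + 1) ≤ β j := chain_up H6 le_rfl hkj hjn
      nlinarith
  | succ m ih =>
    intro l j i hj hjn hjk hi hin hik x hx y hy hyx
    cases l with
    | zero =>
      rw [piece_zero] at hy
      have hx' := piece_succ_subset ha hsum hk1 hkn hj hjn hx
      have hik' : i + 1 ≤ khat := by
        by_contra hc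
        have hki : khat + 1 ≤ i := by omega
        have : alphaOf a (khat + 1) ≤ alphaOf a i := alpha_mono ha (by omega) hki (by omega)
        have := hy.1; have := hx'.2; linarith
      rw [V_succ, V_zero]
      have hl := (V_bound hk1 hkn H2 H3 H4 H5 H6 hd m j hj hjn hjk).1
      have hbl : β i ≤ β (khat - 1) := chain_low H2 hi (by omega) le_rfl
      nlinarith
    | succ l =>
      have hA : 0 < a khat := (cA_facts ha hsum hk1 hkn).1
      have hx' := mem_piece_succ ha hsum hk1 hkn hx
      have hy' := mem_piece_succ ha hsum hk1 hkn hy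
      have hyx' : (y - alphaOf a khat) / a khat ≤ (x - alphaOf a khat) / a khat := by
        gcongr

      have := ih l j i hj hjn hjk hi hin hik _ hx' _ hy' hyx'
      rw [V_succ, V_succ]
      nlinarith

end Order

end Pieces


section Measure

variable {n khat : ℕ} {a d β : ℕ → ℝ} {f : ℝ → ℝ}

lemma simOp_eval (ha : ∀ k ∈ Finset.Icc 1 n, 0 < a k) {k : ℕ} (hk1 : 1 ≤ k) (hkn : k ≤ n)
    {x : ℝ} (hx : x ∈ Set.Ioo (alphaOf a k) (alphaOf a (k + 1))) :
    simOp n a d β f x = β k + d k * f ((x - alphaOf a k) / a k) := by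
  simp only [simOp]
  rw [Finset.sum_eq_single_of_mem k (Finset.mem_Icc.2 ⟨hk1, hkn⟩)]
  · exact Set.indicator_of_mem hx _
  · intro b hb hbk
    rw [Finset.mem_Icc] at hb
    apply Set.indicator_of_notMem
    intro hmem
    rcases lt_or_gt_of_ne hbk with hlt | hgt
    · have : alphaOf a (b + 1) ≤ alphaOf a k := alpha_mono ha (by omega) (by omega) (by omega)
      have := hmem.2; have := hx.1; linarith
    · have : alphaOf a (k + 1) ≤ alphaOf a b := alpha_mono ha (by omega) (by omega) (by omega)
      have := hmem.1; have := hx.2; linarith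

lemma eq_on_interval (ha : ∀ k ∈ Finset.Icc 1 n, 0 < a k)
    (hsum : ∑ k ∈ Finset.Icc 1 n, a k = 1)
    (hfix : f =ᵐ[volume.restrict (Set.Icc (0:ℝ) 1)] simOp n a d β f)
    {k : ℕ} (hk1 : 1 ≤ k) (hkn : k ≤ n) :
    ∀ᵐ x ∂(volume : Measure ℝ), x ∈ Set.Ioo (alphaOf a k) (alphaOf a (k + 1)) →
      f x = β k + d k * f ((x - alphaOf a k) / a k) := by
  have hfix' : ∀ᵐ x ∂(volume : Measure ℝ), x ∈ Set.Icc (0:ℝ) 1 → f x = simOp n a d β f x :=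
    (ae_restrict_iff' measurableSet_Icc).mp hfix
  filter_upwards [hfix'] with x hx hmem
  have hxI : x ∈ Set.Icc (0:ℝ) 1 := by
    constructor
    · have := alpha_nonneg ha hk1 (by omega); linarith [hmem.1]
    · have := alpha_le_one ha hsum (k := k + 1) (by omega) (by omega); linarith [hmem.2]
  rw [hx hxI, simOp_eval ha hk1 hkn hmem]

lemma tau_preimage_null {c A : ℝ} (hA : 0 < A) {N : Set ℝ} (hN : volume N = 0) :
    volume ((fun x : ℝ => (x - c) / A) ⁻¹' N) = 0 := by
  have heq : (fun x : ℝ => (x - c) / A) = (fun y : ℝ => A⁻¹ * y) ∘ (fun x : ℝ => x + (-c)) := by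
    funext x; rw [Function.comp_apply, div_eq_inv_mul]; ring_nf
  rw [heq, Set.preimage_comp]
  rw [measure_preimage_add_right volume (-c) _]
  rw [Real.volume_preimage_mul_left (inv_ne_zero hA.ne') N, hN, mul_zero]

lemma ae_piece (ha : ∀ k ∈ Finset.Icc 1 n, 0 < a k)
    (hsum : ∑ k ∈ Finset.Icc 1 n, a k = 1) (hk1 : 1 < khat) (hkn : khat < n)
    (hd0 : ∀ k ∈ Finset.Icc 1 n, k ≠ khat → d k = 0)
    (hfix : f =ᵐ[volume.restrict (Set.Icc (0:ℝ) 1)] simOp n a d β f) :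
    ∀ m, ∀ j : ℕ, 1 ≤ j → j ≤ n → j ≠ khat →
    ∀ᵐ x ∂(volume : Measure ℝ), x ∈ SelfSim.piece a khat m j →
      f x = V (β khat) (d khat) β m j := by
  intro m
  induction m with
  | zero =>
    intro j hj hjn hjk
    filter_upwards [eq_on_interval ha hsum hfix hj hjn] with x hx hmem
    rw [piece_zero] at hmem
    rw [V_zero, hx hmem, hd0 j (Finset.mem_Icc.2 ⟨hj, hjn⟩) hjk]
    ring
  | succ m ih =>
    intro j hj hjn hjk
    have hA : 0 < a khat := (cA_facts ha hsum hk1 hkn).1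
    have IH := ih j hj hjn hjk
    set N := {y : ℝ | ¬ (y ∈ SelfSim.piece a khat m j → f y = V (β khat) (d khat) β m j)} with hNdef
    have hN : volume N = 0 := by rw [← MeasureTheory.ae_iff]; exact IH
    have hpre : volume ((fun x : ℝ => (x - alphaOf a khat) / a khat) ⁻¹' N) = 0 :=
      tau_preimage_null hA hN
    have htau : ∀ᵐ x ∂(volume : Measure ℝ),
        ((x - alphaOf a khat) / a khat ∈ SelfSim.piece a khat m j →
          f ((x - alphaOf a khat) / a khat) = V (β khat) (d khat) β m j) := by
      rw [MeasureTheory.ae_iff]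
      exact hpre
    filter_upwards [eq_on_interval ha hsum hfix (k := khat) (by omega) (by omega), htau]
      with x h1 h2 hmem
    have hxk : x ∈ Set.Ioo (alphaOf a khat) (alphaOf a (khat + 1)) :=
      piece_succ_subset ha hsum hk1 hkn hj hjn hmem
    have hxt : (x - alphaOf a khat) / a khat ∈ SelfSim.piece a khat m j :=
      mem_piece_succ ha hsum hk1 hkn hmem
    rw [h1 hxk, h2 hxt, V_succ]

lemma A_lt_one (ha : ∀ k ∈ Finset.Icc 1 n, 0 < a k)
    (hsum : ∑ k ∈ Finset.Icc 1 n, a k = 1) (hk1 : 1 < khat) (hkn : khat < n) :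
    a khat < 1 := by
  have hmem : khat ∈ Finset.Icc 1 n := Finset.mem_Icc.2 ⟨by omega, by omega⟩
  have h1mem : (1 : ℕ) ∈ (Finset.Icc 1 n).erase khat := by
    rw [Finset.mem_erase]; exact ⟨by omega, Finset.mem_Icc.2 ⟨le_rfl, by omega⟩⟩
  have hsum' : a khat + ∑ k ∈ (Finset.Icc 1 n).erase khat, a k = 1 := by
    rw [Finset.add_sum_erase _ _ hmem]; exact hsum
  have hle : a 1 ≤ ∑ k ∈ (Finset.Icc 1 n).erase khat, a k := by
    refine Finset.single_le_sum (fun i hi => ?_) h1mem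
    exact (ha i (Finset.mem_of_mem_erase hi)).le
  have h1pos : 0 < a 1 := ha 1 (Finset.mem_Icc.2 ⟨le_rfl, by omega⟩)
  linarith

lemma exists_partition (ha : ∀ k ∈ Finset.Icc 1 n, 0 < a k)
    (hsum : ∑ k ∈ Finset.Icc 1 n, a k = 1) (m : ℕ) {x : ℝ}
    (hx1 : (T (alphaOf a khat) (a khat))^[m] 0 ≤ x)
    (hx2 : x ≤ (T (alphaOf a khat) (a khat))^[m] 1) :
    (∃ k, 1 ≤ k ∧ k ≤ n + 1 ∧ x = (T (alphaOf a khat) (a khat))^[m] (alphaOf a k)) ∨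
    (∃ k, 1 ≤ k ∧ k ≤ n ∧ x ∈ SelfSim.piece a khat m k) := by
  classical
  set Tm := (T (alphaOf a khat) (a khat))^[m] with hTm
  set P : ℕ → Prop := fun k => Tm (alphaOf a k) ≤ x with hP
  have h1 : P 1 := by rw [hP]; simp only [alpha_one]; exact hx1
  set k0 := Nat.findGreatest P (n + 1) with hk0
  have hk0ge : 1 ≤ k0 := Nat.le_findGreatest (by omega) h1
  have hk0le : k0 ≤ n + 1 := Nat.findGreatest_le _
  have hspec : P k0 := Nat.findGreatest_spec (m := 1) (by omega) h1
  rcases eq_or_lt_of_le hspec with heq | hlt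
  · exact Or.inl ⟨k0, hk0ge, hk0le, heq.symm⟩
  · by_cases hk0n : k0 = n + 1
    · exfalso
      have : x ≤ Tm (alphaOf a k0) := by
        rw [hk0n, alpha_top hsum]; exact hx2
      linarith
    · refine Or.inr ⟨k0, hk0ge, by omega, hlt, ?_⟩
      by_contra hc
      push_neg at hc
      exact Nat.findGreatest_is_greatest (lt_add_one k0) (by omega) hc

lemma coverage (ha : ∀ k ∈ Finset.Icc 1 n, 0 < a k)
    (hsum : ∑ k ∈ Finset.Icc 1 n, a k = 1) (hk1 : 1 < khat) (hkn : khat < n) :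
    volume (Set.Icc (0:ℝ) 1 \
      ⋃ (m : ℕ) (j : ℕ) (_ : 1 ≤ j ∧ j ≤ n ∧ j ≠ khat), SelfSim.piece a khat m j) = 0 := by
  obtain ⟨hA, hc, hca, h1⟩ := cA_facts ha hsum hk1 hkn
  set U : Set ℝ := ⋃ (m : ℕ) (j : ℕ) (_ : 1 ≤ j ∧ j ≤ n ∧ j ≠ khat), SelfSim.piece a khat m j with hU
  set Pset : Set ℝ := ⋃ (m : ℕ) (k : ℕ) (_ : 1 ≤ k ∧ k ≤ n + 1),
      {(T (alphaOf a khat) (a khat))^[m] (alphaOf a k)} with hPset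
  have hP : volume Pset = 0 := by
    refine measure_iUnion_null fun m => measure_iUnion_null fun k =>
      measure_iUnion_null fun _ => measure_singleton _
  have hsub : ∀ m : ℕ, (Set.Icc (0:ℝ) 1 \ U) \ Pset ⊆
      Set.Icc ((T (alphaOf a khat) (a khat))^[m] 0) ((T (alphaOf a khat) (a khat))^[m] 1) := by
    intro m
    induction m with
    | zero => intro x hx; simpa using hx.1.1
    | succ m ih =>
      intro x hx
      have hxm := ih hx
      rcases exists_partition ha hsum m hxm.1 hxm.2 with ⟨k, hk1', hkn', heq⟩ | ⟨k, hk1', hkn', hmem⟩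
      · exfalso
        apply hx.2
        rw [hPset]
        exact Set.mem_iUnion.2 ⟨m, Set.mem_iUnion.2 ⟨k, Set.mem_iUnion.2 ⟨⟨hk1', hkn'⟩, heq⟩⟩⟩
      · by_cases hkk : k = khat
        · subst hkk
          have e0 : T (alphaOf a k) (a k) 0 = alphaOf a k := by simp [T]
          have e1 : T (alphaOf a k) (a k) 1 = alphaOf a (k + 1) := by
            simp only [T, mul_one]; linarith
          obtain ⟨hm1, hm2⟩ := hmem
          constructor
          · rw [Function.iterate_succ_apply, e0]; exact hm1.le
          · rw [Function.iterate_succ_apply, e1]; exact hm2.le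
        · exfalso
          apply hx.1.2
          rw [hU]
          exact Set.mem_iUnion.2 ⟨m, Set.mem_iUnion.2 ⟨k, Set.mem_iUnion.2 ⟨⟨hk1', hkn', hkk⟩, hmem⟩⟩⟩
  have hbound : ∀ m : ℕ, volume (Set.Icc (0:ℝ) 1 \ U) ≤ ENNReal.ofReal ((a khat) ^ m) := by
    intro m
    have h1' : Set.Icc (0:ℝ) 1 \ U ⊆ ((Set.Icc (0:ℝ) 1 \ U) \ Pset) ∪ Pset := by
      intro x hx
      by_cases h : x ∈ Pset
      · exact Or.inr h
      · exact Or.inl ⟨hx, h⟩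
    calc volume (Set.Icc (0:ℝ) 1 \ U)
        ≤ volume (((Set.Icc (0:ℝ) 1 \ U) \ Pset) ∪ Pset) := measure_mono h1'
      _ ≤ volume ((Set.Icc (0:ℝ) 1 \ U) \ Pset) + volume Pset := measure_union_le _ _
      _ = volume ((Set.Icc (0:ℝ) 1 \ U) \ Pset) := by rw [hP, add_zero]
      _ ≤ volume (Set.Icc ((T (alphaOf a khat) (a khat))^[m] 0)
            ((T (alphaOf a khat) (a khat))^[m] 1)) := measure_mono (hsub m)
      _ = ENNReal.ofReal ((a khat) ^ m) := by
          rw [Real.volume_Icc]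
          congr 1
          have := T_iter_sub (c := alphaOf a khat) (A := a khat) m 1 0
          simpa using this
  have hA1 : a khat < 1 := A_lt_one ha hsum hk1 hkn
  have htend : Filter.Tendsto (fun m : ℕ => ENNReal.ofReal ((a khat) ^ m))
      Filter.atTop (nhds 0) := by
    have h0 : Filter.Tendsto (fun m : ℕ => (a khat) ^ m) Filter.atTop (nhds 0) :=
      tendsto_pow_atTop_nhds_zero_of_lt_one hA.le hA1
    have := (ENNReal.continuous_ofReal.tendsto 0).comp h0
    simpa [Function.comp_def] using this
  have hle : volume (Set.Icc (0:ℝ) 1 \ U) ≤ 0 := ge_of_tendsto' htend hbound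
  exact le_antisymm hle zero_le

lemma exists_point {s t : ℝ} (hst : s < t) {Q : ℝ → Prop}
    (hQ : ∀ᵐ x ∂(volume : Measure ℝ), x ∈ Set.Ioo s t → Q x) :
    ∃ x, x ∈ Set.Ioo s t ∧ Q x := by
  by_contra h
  push_neg at h
  have hsub : Set.Ioo s t ⊆ {x : ℝ | ¬ (x ∈ Set.Ioo s t → Q x)} := by
    intro x hx
    simp only [Set.mem_setOf_eq]
    intro himp
    exact h x hx (himp hx)
  have h0 : volume {x : ℝ | ¬ (x ∈ Set.Ioo s t → Q x)} = 0 := by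
    rw [← MeasureTheory.ae_iff]; exact hQ
  have : (volume : Measure ℝ) (Set.Ioo s t) ≤
      volume {x : ℝ | ¬ (x ∈ Set.Ioo s t → Q x)} := measure_mono hsub
  rw [h0, Real.volume_Ioo] at this
  simp only [nonpos_iff_eq_zero, ENNReal.ofReal_eq_zero] at this
  linarith

lemma mono_value_le {g : ℝ → ℝ} (hg : MonotoneOn g (Set.Icc (0:ℝ) 1))
    (hfg : ∀ᵐ x ∂(volume : Measure ℝ), x ∈ Set.Icc (0:ℝ) 1 → f x = g x)
    {v w s t u r : ℝ} (h0 : 0 ≤ s) (hst : s < t) (htu : t ≤ u) (hur : u < r) (hr1 : r ≤ 1)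
    (hv : ∀ᵐ x ∂(volume : Measure ℝ), x ∈ Set.Ioo s t → f x = v)
    (hw : ∀ᵐ x ∂(volume : Measure ℝ), x ∈ Set.Ioo u r → f x = w) : v ≤ w := by
  have hsub1 : Set.Ioo s t ⊆ Set.Icc (0:ℝ) 1 := fun x hx => ⟨by linarith [hx.1], by linarith [hx.2]⟩
  have hsub2 : Set.Ioo u r ⊆ Set.Icc (0:ℝ) 1 := fun x hx => ⟨by linarith [hx.1], by linarith [hx.2]⟩
  have hv' : ∀ᵐ x ∂(volume : Measure ℝ), x ∈ Set.Ioo s t → f x = v ∧ f x = g x := by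
    filter_upwards [hv, hfg] with x h1 h2 hx
    exact ⟨h1 hx, h2 (hsub1 hx)⟩
  have hw' : ∀ᵐ x ∂(volume : Measure ℝ), x ∈ Set.Ioo u r → f x = w ∧ f x = g x := by
    filter_upwards [hw, hfg] with x h1 h2 hx
    exact ⟨h1 hx, h2 (hsub2 hx)⟩
  obtain ⟨x, hx, hxv, hxg⟩ := exists_point hst hv'
  obtain ⟨y, hy, hyw, hyg⟩ := exists_point hur hw'
  have hxy : x ≤ y := by linarith [hx.2, hy.1]
  have := hg (hsub1 hx) (hsub2 hy) hxy
  rw [← hxg, ← hyg, hxv, hyw] at this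
  exact this

lemma ae_eq_of_pieces (ha : ∀ k ∈ Finset.Icc 1 n, 0 < a k)
    (hsum : ∑ k ∈ Finset.Icc 1 n, a k = 1) (hk1 : 1 < khat) (hkn : khat < n)
    (hd0 : ∀ k ∈ Finset.Icc 1 n, k ≠ khat → d k = 0)
    (hfix : f =ᵐ[volume.restrict (Set.Icc (0:ℝ) 1)] simOp n a d β f)
    (g : ℝ → ℝ)
    (hg : ∀ m j : ℕ, 1 ≤ j → j ≤ n → j ≠ khat →
      ∀ x ∈ SelfSim.piece a khat m j, g x = V (β khat) (d khat) β m j) :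
    f =ᵐ[volume.restrict (Set.Icc (0:ℝ) 1)] g := by
  rw [Filter.EventuallyEq, ae_restrict_iff' measurableSet_Icc]
  have hall : ∀ᵐ x ∂(volume : Measure ℝ), ∀ m j : ℕ, 1 ≤ j → j ≤ n → j ≠ khat →
      (x ∈ SelfSim.piece a khat m j → f x = V (β khat) (d khat) β m j) := by
    rw [MeasureTheory.ae_all_iff]
    intro m
    rw [MeasureTheory.ae_all_iff]
    intro j
    by_cases h : 1 ≤ j ∧ j ≤ n ∧ j ≠ khat
    · filter_upwards [ae_piece ha hsum hk1 hkn hd0 hfix m j h.1 h.2.1 h.2.2] with x hx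
      intro _ _ _
      exact hx
    · filter_upwards with x h1 h2 h3
      exact absurd ⟨h1, h2, h3⟩ h
  have hcov : ∀ᵐ x ∂(volume : Measure ℝ), x ∉ (Set.Icc (0:ℝ) 1 \
      ⋃ (m : ℕ) (j : ℕ) (_ : 1 ≤ j ∧ j ≤ n ∧ j ≠ khat), SelfSim.piece a khat m j) := by
    rw [← MeasureTheory.measure_eq_zero_iff_ae_notMem]
    exact coverage ha hsum hk1 hkn
  filter_upwards [hall, hcov] with x hx hxc hmemIcc
  have hU : x ∈ ⋃ (m : ℕ) (j : ℕ) (_ : 1 ≤ j ∧ j ≤ n ∧ j ≠ khat), SelfSim.piece a khat m j := by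
    by_contra h
    exact hxc ⟨hmemIcc, h⟩
  obtain ⟨m, hm⟩ := Set.mem_iUnion.1 hU
  obtain ⟨j, hj⟩ := Set.mem_iUnion.1 hm
  obtain ⟨⟨hj1, hj2, hj3⟩, hxp⟩ := Set.mem_iUnion.1 hj
  rw [hx m j hj1 hj2 hj3 hxp, hg m j hj1 hj2 hj3 x hxp]

end Measure

end SelfSim

/-- monotonicity criterion for a nonconstant self-similar function of zero
spectral order with `1 < k̂ < n`. -/
theorem selfSimilar_zeroOrder_monotone_iff_mid
    (n : ℕ) (hn : 1 < n) (a d β : ℕ → ℝ)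
    (ha : ∀ k ∈ Finset.Icc 1 n, 0 < a k)
    (hsum : ∑ k ∈ Finset.Icc 1 n, a k = 1)
    (p : ℝ≥0∞) (hp1 : 1 ≤ p) (hpt : p ≠ ⊤)
    (khat : ℕ) (hk : khat ∈ Finset.Icc 1 n)
    (hdk : d khat ≠ 0)
    (hd0 : ∀ k ∈ Finset.Icc 1 n, k ≠ khat → d k = 0)
    (hβ : ∃ k ∈ Finset.Icc 1 n, β k ≠ 0)
    (hcontr : a khat * |d khat| ^ p.toReal < 1)
    (f : ℝ → ℝ) (hf : MemLp f p (volume.restrict (Set.Icc (0:ℝ) 1)))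
    (hfix : f =ᵐ[volume.restrict (Set.Icc (0:ℝ) 1)] simOp n a d β f)
    (hk1 : 1 < khat) (hkn : khat < n)
    (hnc : ¬ ∃ c : ℝ, f =ᵐ[volume.restrict (Set.Icc (0:ℝ) 1)] (fun _ => c)) :
    (∃ g : ℝ → ℝ, MonotoneOn g (Set.Icc (0:ℝ) 1) ∧
        f =ᵐ[volume.restrict (Set.Icc (0:ℝ) 1)] g) ↔
      (0 < d khat ∧
       (∀ i : ℕ, 1 ≤ i → i + 1 ≤ khat - 1 → β i ≤ β (i + 1)) ∧
       β (khat - 1) ≤ d khat * β 1 + β khat ∧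
       d khat * β 1 + β khat ≤ d khat * β n + β khat ∧
       d khat * β n + β khat ≤ β (khat + 1) ∧
       (∀ i : ℕ, khat + 1 ≤ i → i + 1 ≤ n → β i ≤ β (i + 1))) := by
  classical
  obtain ⟨hA, hc0, hca, hca1⟩ := SelfSim.cA_facts ha hsum hk1 hkn
  have hT := SelfSim.T_mono (c := alphaOf a khat) hA
  have Claims := SelfSim.ae_piece ha hsum hk1 hkn hd0 hfix
  have hp0 : ∀ j : ℕ, 1 ≤ j → j ≤ n → j ≠ khat →
      ∀ᵐ x ∂(volume : Measure ℝ),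
        x ∈ Set.Ioo (alphaOf a j) (alphaOf a (j+1)) → f x = β j := by
    intro j h1 h2 h3
    have := Claims 0 j h1 h2 h3
    simpa [SelfSim.piece_zero, SelfSim.V_zero] using this
  have hp1 : ∀ j : ℕ, 1 ≤ j → j ≤ n → j ≠ khat →
      ∀ᵐ x ∂(volume : Measure ℝ),
        x ∈ Set.Ioo (SelfSim.T (alphaOf a khat) (a khat) (alphaOf a j))
          (SelfSim.T (alphaOf a khat) (a khat) (alphaOf a (j+1))) →
          f x = β khat + d khat * β j := by
    intro j h1 h2 h3
    have := Claims 1 j h1 h2 h3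
    simpa [SelfSim.piece, SelfSim.V_succ, SelfSim.V_zero, Function.iterate_one] using this
  have e0 : SelfSim.T (alphaOf a khat) (a khat) (alphaOf a 1) = alphaOf a khat := by
    rw [SelfSim.alpha_one]; simp [SelfSim.T]
  have eN : SelfSim.T (alphaOf a khat) (a khat) (alphaOf a (n+1)) = alphaOf a (khat+1) := by
    rw [SelfSim.alpha_top hsum]; simp only [SelfSim.T, mul_one]; linarith
  constructor
  · rintro ⟨g, hgmono, hgae⟩
    have hfg : ∀ᵐ x ∂(volume : Measure ℝ), x ∈ Set.Icc (0:ℝ) 1 → f x = g x :=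
      (ae_restrict_iff' measurableSet_Icc).mp hgae
    have I2 : ∀ i : ℕ, 1 ≤ i → i + 1 ≤ khat - 1 → β i ≤ β (i + 1) := by
      intro i h1 h2
      exact SelfSim.mono_value_le hgmono hfg
        (SelfSim.alpha_nonneg ha h1 (by omega))
        (SelfSim.alpha_strict ha h1 (by omega) (by omega)) le_rfl
        (SelfSim.alpha_strict ha (by omega) (by omega) (by omega))
        (SelfSim.alpha_le_one ha hsum (by omega) (by omega))
        (hp0 i h1 (by omega) (by omega)) (hp0 (i+1) (by omega) (by omega) (by omega))
    have I6 : ∀ i : ℕ, khat + 1 ≤ i → i + 1 ≤ n → β i ≤ β (i + 1) := by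
      intro i h1 h2
      exact SelfSim.mono_value_le hgmono hfg
        (SelfSim.alpha_nonneg ha (by omega) (by omega))
        (SelfSim.alpha_strict ha (by omega) (by omega) (by omega)) le_rfl
        (SelfSim.alpha_strict ha (by omega) (by omega) (by omega))
        (SelfSim.alpha_le_one ha hsum (by omega) (by omega))
        (hp0 i (by omega) (by omega) (by omega)) (hp0 (i+1) (by omega) (by omega) (by omega))
    have I3 : β (khat - 1) ≤ d khat * β 1 + β khat := by
      have e' : khat - 1 + 1 = khat := by omega
      have h := SelfSim.mono_value_le hgmono hfg
        (s := alphaOf a (khat - 1)) (t := alphaOf a (khat - 1 + 1))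
        (u := SelfSim.T (alphaOf a khat) (a khat) (alphaOf a 1))
        (r := SelfSim.T (alphaOf a khat) (a khat) (alphaOf a 2))
        (SelfSim.alpha_nonneg ha (by omega) (by omega))
        (SelfSim.alpha_strict ha (by omega) (by omega) (by omega))
        (by rw [e', e0])
        (hT (SelfSim.alpha_strict ha (by omega) (by omega) (by omega)))
        (by
          have h2n : alphaOf a 2 ≤ alphaOf a (n+1) :=
            SelfSim.alpha_mono ha (by omega) (by omega) (by omega)
          have := hT.monotone h2n
          rw [eN] at this
          linarith)
        (hp0 (khat - 1) (by omega) (by omega) (by omega))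
        (hp1 1 le_rfl (by omega) (by omega))
      linarith
    have I4 : d khat * β 1 + β khat ≤ d khat * β n + β khat := by
      have h := SelfSim.mono_value_le hgmono hfg
        (s := SelfSim.T (alphaOf a khat) (a khat) (alphaOf a 1))
        (t := SelfSim.T (alphaOf a khat) (a khat) (alphaOf a 2))
        (u := SelfSim.T (alphaOf a khat) (a khat) (alphaOf a n))
        (r := SelfSim.T (alphaOf a khat) (a khat) (alphaOf a (n+1)))
        (by rw [e0]; exact hc0)
        (hT (SelfSim.alpha_strict ha (by omega) (by omega) (by omega)))
        (hT.monotone (SelfSim.alpha_mono ha (by omega) (by omega) (by omega)))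
        (hT (SelfSim.alpha_strict ha (by omega) (by omega) (by omega)))
        (by rw [eN]; exact hca1)
        (hp1 1 le_rfl (by omega) (by omega))
        (hp1 n (by omega) le_rfl (by omega))
      linarith
    have I5 : d khat * β n + β khat ≤ β (khat + 1) := by
      have h := SelfSim.mono_value_le hgmono hfg
        (s := SelfSim.T (alphaOf a khat) (a khat) (alphaOf a n))
        (t := SelfSim.T (alphaOf a khat) (a khat) (alphaOf a (n+1)))
        (u := alphaOf a (khat + 1))
        (r := alphaOf a (khat + 2))
        (by
          have h1n : alphaOf a 1 ≤ alphaOf a n :=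
            SelfSim.alpha_mono ha (by omega) (by omega) (by omega)
          have := hT.monotone h1n
          rw [e0] at this
          linarith)
        (hT (SelfSim.alpha_strict ha (by omega) (by omega) (by omega)))
        (by rw [eN])
        (SelfSim.alpha_strict ha (by omega) (by omega) (by omega))
        (SelfSim.alpha_le_one ha hsum (by omega) (by omega))
        (hp1 n (by omega) le_rfl (by omega))
        (hp0 (khat + 1) (by omega) (by omega) (by omega))
      linarith
    refine ⟨?_, I2, I3, I4, I5, I6⟩
    rcases lt_trichotomy (d khat) 0 with hdneg | hd0' | hdpos
    · exfalso
      have hb1n : β 1 ≤ β n := by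
        have c1 : β 1 ≤ β (khat - 1) := SelfSim.chain_low I2 le_rfl (by omega) le_rfl
        have c2 : β (khat + 1) ≤ β n := SelfSim.chain_up I6 le_rfl (by omega) le_rfl
        linarith
      have hbn1 : β n ≤ β 1 := by nlinarith
      have hC : ∀ j : ℕ, 1 ≤ j → j ≤ n → j ≠ khat → β j = β 1 := by
        intro j h1 h2 h3
        have c1 : β 1 ≤ β j := SelfSim.chain hk1 hkn I2 I3 I4 I5 I6 le_rfl h1 h2 (by omega) h3
        have c2 : β j ≤ β n := SelfSim.chain hk1 hkn I2 I3 I4 I5 I6 h1 h2 le_rfl h3 (by omega)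
        linarith
      have hBD : β khat + d khat * β 1 = β 1 := by
        have c1 : β (khat - 1) = β 1 := hC (khat - 1) (by omega) (by omega) (by omega)
        have c2 : β (khat + 1) = β 1 := hC (khat + 1) (by omega) (by omega) (by omega)
        linarith
      have hVC : ∀ m, ∀ j : ℕ, 1 ≤ j → j ≤ n → j ≠ khat →
          SelfSim.V (β khat) (d khat) β m j = β 1 := by
        intro m
        induction m with
        | zero => intro j h1 h2 h3; rw [SelfSim.V_zero]; exact hC j h1 h2 h3
        | succ m ih =>
          intro j h1 h2 h3
          rw [SelfSim.V_succ, ih j h1 h2 h3]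
          linarith
      apply hnc
      refine ⟨β 1, SelfSim.ae_eq_of_pieces ha hsum hk1 hkn hd0 hfix _ ?_⟩
      intro m j h1 h2 h3 x _
      exact (hVC m j h1 h2 h3).symm
    · exact absurd hd0' hdk
    · exact hdpos
  · rintro ⟨hd, H2, H3, H4, H5, H6⟩
    set S : ℝ → Set ℝ := fun x => {v : ℝ | v = β 1 ∨ ∃ m j : ℕ, 1 ≤ j ∧ j ≤ n ∧ j ≠ khat ∧
      (∃ y ∈ SelfSim.piece a khat m j, y ≤ x) ∧ v = SelfSim.V (β khat) (d khat) β m j} with hS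
    have hne : ∀ x, (S x).Nonempty := fun x => ⟨β 1, Or.inl rfl⟩
    have hb1n : β 1 ≤ β n :=
      SelfSim.chain hk1 hkn H2 H3 H4 H5 H6 le_rfl (by omega) le_rfl (by omega) (by omega)
    have hbdd : ∀ x, BddAbove (S x) := by
      intro x
      refine ⟨β n, fun v hv => ?_⟩
      rcases hv with rfl | ⟨m, j, h1, h2, h3, _, rfl⟩
      · exact hb1n
      · exact (SelfSim.V_bound hk1 hkn H2 H3 H4 H5 H6 hd m j h1 h2 h3).2
    set g : ℝ → ℝ := fun x => sSup (S x) with hg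
    have hmono : Monotone g := by
      intro x y hxy
      refine csSup_le_csSup (hbdd y) (hne x) ?_
      intro v hv
      rcases hv with rfl | ⟨m, j, h1, h2, h3, ⟨z, hz, hzx⟩, rfl⟩
      · exact Or.inl rfl
      · exact Or.inr ⟨m, j, h1, h2, h3, ⟨z, hz, le_trans hzx hxy⟩, rfl⟩
    have hval : ∀ m j : ℕ, 1 ≤ j → j ≤ n → j ≠ khat →
        ∀ x ∈ SelfSim.piece a khat m j, g x = SelfSim.V (β khat) (d khat) β m j := by
      intro m j h1 h2 h3 x hx
      refine le_antisymm ?_ ?_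
      · refine csSup_le (hne x) ?_
        intro v hv
        rcases hv with rfl | ⟨l, i, hi1, hi2, hi3, ⟨y, hy, hyx⟩, rfl⟩
        · exact (SelfSim.V_bound hk1 hkn H2 H3 H4 H5 H6 hd m j h1 h2 h3).1
        · exact SelfSim.key_mono hk1 hkn H2 H3 H4 H5 H6 hd ha hsum m l j i h1 h2 h3
            hi1 hi2 hi3 x hx y hy hyx
      · exact le_csSup (hbdd x) (Or.inr ⟨m, j, h1, h2, h3, ⟨x, hx, le_rfl⟩, rfl⟩)
    exact ⟨g, hmono.monotoneOn _,
      SelfSim.ae_eq_of_pieces ha hsum hk1 hkn hd0 hfix g hval⟩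
end

section
/- Let f ∈ L_p[0,1] (1 ≤ p < ∞) be the fixed point of the orientation-reversing-at-k̂ similarity operator G̃ of zero spectral order with 1 < k̂ < n, and assume f is not almost everywhere equal to a constant. Then f coincides almost everywhere with a nondecreasing function on [0,1] if and only if d_{k̂} < 0 and β_1 ≤ β_2 ≤ … ≤ β_{k̂−1} ≤ d_{k̂}β_n + β_{k̂} ≤ d_{k̂}β_1 + β_{k̂} ≤ β_{k̂+1} ≤ … ≤ β_n. -/
open MeasureTheory Set Filter
open scoped ENNReal NNReal

/-- The orientation-reversing-at-`k̂` similarity operator `G̃`: on `(α_k, α_{k+1})` with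
`k ≠ k̂` it takes the value `β_k + d_k · f((x − α_k)/a_k)`, and on `(α_{k̂}, α_{k̂+1})` the
value `β_{k̂} + d_{k̂} · f((α_{k̂+1} − x)/a_{k̂})`. -/
noncomputable def simOpRev (n khat : ℕ) (a d β : ℕ → ℝ) (f : ℝ → ℝ) : ℝ → ℝ :=
  fun x => ∑ k ∈ Finset.Icc 1 n,
    Set.indicator (Set.Ioo (alphaOf a k) (alphaOf a (k + 1)))
      (fun y => if k = khat then β k + d k * f ((alphaOf a (k + 1) - y) / a k)
        else β k + d k * f ((y - alphaOf a k) / a k)) x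

noncomputable def ssPiece (R A : ℝ) (α : ℕ → ℝ) : ℕ → ℕ → ℝ × ℝ
  | 0, k => (α k, α (k+1))
  | m+1, k => (R - A * (ssPiece R A α m k).2, R - A * (ssPiece R A α m k).1)

noncomputable def ssVal (b dd : ℝ) (β : ℕ → ℝ) : ℕ → ℕ → ℝ
  | 0, k => β k
  | m+1, k => b + dd * ssVal b dd β m k

/-- data hypotheses for the geometry -/
structure SSData (n khat : ℕ) (α : ℕ → ℝ) (R A : ℝ) : Prop where
  hA : 0 < A
  mono : ∀ i j, 1 ≤ i → i ≤ j → j ≤ n+1 → α i ≤ α j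
  strict : ∀ i j, 1 ≤ i → i < j → j ≤ n+1 → α i < α j
  α1 : α 1 = 0
  αtop : α (n+1) = 1
  hkk : 2 ≤ khat
  hkn : khat + 1 ≤ n
  hR : R = α (khat+1)
  hL : α khat = R - A

/-- order hypotheses on the values -/
structure SSOrd (n khat : ℕ) (β : ℕ → ℝ) (b dd : ℝ) : Prop where
  hdd : dd < 0
  c1 : ∀ i j, 1 ≤ i → i ≤ j → j ≤ khat - 1 → β i ≤ β j
  c2 : ∀ i j, khat+1 ≤ i → i ≤ j → j ≤ n → β i ≤ β j
  h3 : β (khat-1) ≤ b + dd * β n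
  h4 : b + dd * β n ≤ b + dd * β 1
  h5 : b + dd * β 1 ≤ β (khat+1)

abbrev ssValid (n khat k : ℕ) : Prop := 1 ≤ k ∧ k ≤ n ∧ k ≠ khat

namespace SSData
variable {n khat : ℕ} {α : ℕ → ℝ} {R A : ℝ} (h : SSData n khat α R A)
include h

lemma L_nonneg : 0 ≤ α khat := by
  have hkk := h.hkk; have hkn := h.hkn
  have := h.mono 1 khat le_rfl (by omega) (by omega); rw [h.α1] at this; exact this

lemma R_le_one : R ≤ 1 := by
  have hkk := h.hkk; have hkn := h.hkn
  rw [h.hR, ← h.αtop]; exact h.mono (khat+1) (n+1) (by omega) (by omega) le_rfl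

lemma LltR : α khat < R := by
  have hkk := h.hkk; have hkn := h.hkn
  rw [h.hR]; exact h.strict khat (khat+1) (by omega) (by omega) (by omega)

/-- basic bounds: pieces live in `[0,1]` and are nonempty. -/
lemma ss_bounds : ∀ m k, 1 ≤ k → k ≤ n →
    0 ≤ (ssPiece R A α m k).1 ∧ (ssPiece R A α m k).2 ≤ 1 ∧
      (ssPiece R A α m k).1 < (ssPiece R A α m k).2 := by
  intro m
  induction m with
  | zero =>
    intro k h1 h2
    refine ⟨?_, ?_, ?_⟩
    · have := h.mono 1 k le_rfl h1 (by omega); rw [h.α1] at this; exact this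
    · have := h.mono (k+1) (n+1) (by omega) (by omega) le_rfl; rw [h.αtop] at this
      exact this
    · exact h.strict k (k+1) h1 (by omega) (by omega)
  | succ m ih =>
    intro k h1 h2
    obtain ⟨i0, i1, i2⟩ := ih k h1 h2
    have hA := h.hA
    refine ⟨?_, ?_, ?_⟩
    · show 0 ≤ R - A * (ssPiece R A α m k).2
      have : A * (ssPiece R A α m k).2 ≤ A * 1 := by nlinarith
      have h0 := h.L_nonneg; rw [h.hL] at h0; nlinarith
    · show R - A * (ssPiece R A α m k).1 ≤ 1
      have := h.R_le_one; nlinarith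
    · show R - A * (ssPiece R A α m k).2 < R - A * (ssPiece R A α m k).1
      nlinarith

/-- pieces of positive level lie inside `[L,R]`. -/
lemma ss_inner (m k : ℕ) (h1 : 1 ≤ k) (h2 : k ≤ n) :
    α khat ≤ (ssPiece R A α (m+1) k).1 ∧ (ssPiece R A α (m+1) k).2 ≤ R := by
  obtain ⟨i0, i1, _⟩ := h.ss_bounds m k h1 h2
  have hA := h.hA
  constructor
  · show α khat ≤ R - A * (ssPiece R A α m k).2
    rw [h.hL]; nlinarith
  · show R - A * (ssPiece R A α m k).1 ≤ R
    nlinarith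

/-- trichotomy: two distinct pieces are separated. -/
lemma ss_tri : ∀ N m m' k k', m + m' = N → ssValid n khat k → ssValid n khat k' →
    (m ≠ m' ∨ k ≠ k') →
    (ssPiece R A α m k).2 ≤ (ssPiece R A α m' k').1 ∨
      (ssPiece R A α m' k').2 ≤ (ssPiece R A α m k).1 := by
  have hkk := h.hkk; have hkn := h.hkn
  intro N
  induction N using Nat.strong_induction_on with
  | _ N IH =>
    intro m m' k k' hN hv hv' hne
    obtain ⟨hk1, hk2, hk3⟩ := hv
    obtain ⟨hk1', hk2', hk3'⟩ := hv'
    obtain _|m := m <;> obtain _|m' := m'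
    · rcases Nat.lt_or_ge k k' with hlt | hge
      · left; exact h.mono (k+1) k' (by omega) (by omega) (by omega)
      · have hlt : k' < k := by
          rcases hne with h1 | h1
          · omega
          · omega
        right; exact h.mono (k'+1) k (by omega) (by omega) (by omega)
    · rcases Nat.lt_or_ge k khat with hlt | hge
      · left
        have h1 : α (k+1) ≤ α khat := h.mono (k+1) khat (by omega) (by omega) (by omega)
        exact h1.trans (h.ss_inner m' k' hk1' hk2').1
      · right
        have hgt : khat < k := by omega
        have h1 : α (khat+1) ≤ α k := h.mono (khat+1) k (by omega) (by omega) (by omega)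
        exact ((h.ss_inner m' k' hk1' hk2').2.trans (h.hR ▸ h1))
    · rcases Nat.lt_or_ge k' khat with hlt | hge
      · right
        have h1 : α (k'+1) ≤ α khat := h.mono (k'+1) khat (by omega) (by omega) (by omega)
        exact h1.trans (h.ss_inner m k hk1 hk2).1
      · left
        have hgt : khat < k' := by omega
        have h1 : α (khat+1) ≤ α k' := h.mono (khat+1) k' (by omega) (by omega) (by omega)
        exact ((h.ss_inner m k hk1 hk2).2.trans (h.hR ▸ h1))
    · have hA := h.hA
      have hne' : m' ≠ m ∨ k' ≠ k := by
        rcases hne with h1 | h1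
        · left; omega
        · right; exact fun e => h1 e.symm
      have hIH := IH (m' + m) (by omega) m' m k' k rfl ⟨hk1', hk2', hk3'⟩ ⟨hk1, hk2, hk3⟩ hne'
      rcases hIH with h1 | h1
      · left
        show R - A * (ssPiece R A α m k).1 ≤ R - A * (ssPiece R A α m' k').2
        nlinarith
      · right
        show R - A * (ssPiece R A α m' k').1 ≤ R - A * (ssPiece R A α m k).2
        nlinarith

end SSData

section Vals
variable {n khat : ℕ} {α β : ℕ → ℝ} {R A b dd : ℝ}
variable (h : SSData n khat α R A) (ho : SSOrd n khat β b dd)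
include ho

lemma ssOrd_lo {k : ℕ} (hv : ssValid n khat k) (hkk : 2 ≤ khat) (hkn : khat + 1 ≤ n) :
    β 1 ≤ β k := by
  obtain ⟨h1, h2, h3⟩ := hv
  rcases Nat.lt_or_ge k khat with hlt | hge
  · exact ho.c1 1 k le_rfl h1 (by omega)
  · have : khat + 1 ≤ k := by omega
    have b1 : β 1 ≤ β (khat - 1) := ho.c1 1 (khat-1) le_rfl (by omega) le_rfl
    calc β 1 ≤ β (khat-1) := b1
      _ ≤ b + dd * β n := ho.h3
      _ ≤ b + dd * β 1 := ho.h4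
      _ ≤ β (khat+1) := ho.h5
      _ ≤ β k := ho.c2 (khat+1) k le_rfl this h2

lemma ssOrd_hi {k : ℕ} (hv : ssValid n khat k) (hkk : 2 ≤ khat) (hkn : khat + 1 ≤ n) :
    β k ≤ β n := by
  obtain ⟨h1, h2, h3⟩ := hv
  rcases Nat.lt_or_ge k khat with hlt | hge
  · calc β k ≤ β (khat-1) := ho.c1 k (khat-1) h1 (by omega) le_rfl
      _ ≤ b + dd * β n := ho.h3
      _ ≤ b + dd * β 1 := ho.h4
      _ ≤ β (khat+1) := ho.h5
      _ ≤ β n := ho.c2 (khat+1) n le_rfl hkn le_rfl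
  · exact ho.c2 k n (by omega) h2 le_rfl

/-- global bounds on piece values. -/
lemma ss_glb (hkk : 2 ≤ khat) (hkn : khat + 1 ≤ n) :
    ∀ m k, ssValid n khat k → β 1 ≤ ssVal b dd β m k ∧ ssVal b dd β m k ≤ β n := by
  intro m
  induction m with
  | zero => intro k hv; exact ⟨ssOrd_lo ho hv hkk hkn, ssOrd_hi ho hv hkk hkn⟩
  | succ m ih =>
    intro k hv
    obtain ⟨i1, i2⟩ := ih k hv
    have hdd := ho.hdd
    have lo : b + dd * β n ≤ b + dd * ssVal b dd β m k := by nlinarith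
    have hi : b + dd * ssVal b dd β m k ≤ b + dd * β 1 := by nlinarith
    have b1 : β 1 ≤ β (khat - 1) := ho.c1 1 (khat-1) le_rfl (by omega) le_rfl
    have bn : β (khat+1) ≤ β n := ho.c2 (khat+1) n le_rfl hkn le_rfl
    constructor
    · show β 1 ≤ b + dd * ssVal b dd β m k
      calc β 1 ≤ β (khat-1) := b1
        _ ≤ b + dd * β n := ho.h3
        _ ≤ _ := lo
    · show b + dd * ssVal b dd β m k ≤ β n
      calc b + dd * ssVal b dd β m k ≤ b + dd * β 1 := hi
        _ ≤ β (khat+1) := ho.h5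
        _ ≤ β n := bn

include h

/-- separated pieces have ordered values. -/
lemma ss_vle : ∀ N m m' k k', m + m' = N → ssValid n khat k → ssValid n khat k' →
    (ssPiece R A α m k).2 ≤ (ssPiece R A α m' k').1 →
    ssVal b dd β m k ≤ ssVal b dd β m' k' := by
  have hkk := h.hkk; have hkn := h.hkn
  have hdd := ho.hdd
  intro N
  induction N using Nat.strong_induction_on with
  | _ N IH =>
    intro m m' k k' hN hv hv' hlt
    obtain ⟨hk1, hk2, hk3⟩ := hv
    obtain ⟨hk1', hk2', hk3'⟩ := hv'
    obtain _|m := m <;> obtain _|m' := m'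
    · -- both level zero
      have hkl : k + 1 ≤ k' := by
        by_contra hc
        have : k' ≤ k := by omega
        have h1 : α k' ≤ α k := h.mono k' k hk1' this (by omega)
        have h2 : α k < α (k+1) := h.strict k (k+1) hk1 (by omega) (by omega)
        simp only [ssPiece] at hlt
        linarith
      show β k ≤ β k'
      rcases Nat.lt_or_ge k' khat with hc1 | hc2
      · exact ho.c1 k k' hk1 (by omega) (by omega)
      · rcases Nat.lt_or_ge k khat with hd1 | hd2
        · calc β k ≤ β (khat - 1) := ho.c1 k (khat-1) hk1 (by omega) le_rfl
            _ ≤ b + dd * β n := ho.h3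
            _ ≤ b + dd * β 1 := ho.h4
            _ ≤ β (khat+1) := ho.h5
            _ ≤ β k' := ho.c2 (khat+1) k' le_rfl (by omega) hk2'
        · exact ho.c2 k k' (by omega) (by omega) hk2'
    · -- left piece at level 0, right inside
      have hin := h.ss_inner m' k' hk1' hk2'
      have hne := (h.ss_bounds (m'+1) k' hk1' hk2').2.2
      have hup : α (k+1) < α (khat + 1) := by
        have e : (ssPiece R A α 0 k).2 = α (k+1) := rfl
        rw [e] at hlt
        have hR' := h.hR
        have h2 := hin.2
        rw [hR'] at h2
        linarith
      have hkle : k ≤ khat - 1 := by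
        by_contra hc
        have : khat + 1 ≤ k + 1 := by omega
        have := h.mono (khat+1) (k+1) (by omega) this (by omega)
        linarith
      have hglb := (ss_glb ho hkk hkn m' k' ⟨hk1', hk2', hk3'⟩).2
      show β k ≤ b + dd * ssVal b dd β m' k'
      calc β k ≤ β (khat - 1) := ho.c1 k (khat-1) hk1 hkle le_rfl
        _ ≤ b + dd * β n := ho.h3
        _ ≤ b + dd * ssVal b dd β m' k' := by nlinarith
    · -- left inside, right at level 0
      have hin := h.ss_inner m k hk1 hk2
      have hne := (h.ss_bounds (m+1) k hk1 hk2).2.2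
      have hup : α khat < α k' := by
        have : (ssPiece R A α 0 k').1 = α k' := rfl
        rw [this] at hlt
        linarith [hin.1]
      have hkge : khat + 1 ≤ k' := by
        by_contra hc
        have : k' ≤ khat := by omega
        have := h.mono k' khat hk1' this (by omega)
        linarith
      have hglb := (ss_glb ho hkk hkn m k ⟨hk1, hk2, hk3⟩).1
      show b + dd * ssVal b dd β m k ≤ β k'
      calc b + dd * ssVal b dd β m k ≤ b + dd * β 1 := by nlinarith
        _ ≤ β (khat+1) := ho.h5
        _ ≤ β k' := ho.c2 (khat+1) k' le_rfl hkge hk2'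
    · -- both inside
      have hA := h.hA
      have hlt' : (ssPiece R A α m' k').2 ≤ (ssPiece R A α m k).1 := by
        have e1 : (ssPiece R A α (m+1) k).2 = R - A * (ssPiece R A α m k).1 := rfl
        have e2 : (ssPiece R A α (m'+1) k').1 = R - A * (ssPiece R A α m' k').2 := rfl
        rw [e1, e2] at hlt
        nlinarith
      have hIH := IH (m' + m) (by omega) m' m k' k rfl ⟨hk1', hk2', hk3'⟩ ⟨hk1, hk2, hk3⟩ hlt'
      show b + dd * ssVal b dd β m k ≤ b + dd * ssVal b dd β m' k'
      nlinarith

end Vals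

lemma ae_comp_affine {P : ℝ → Prop} (c A : ℝ) (hA : A ≠ 0) (h : ∀ᵐ x : ℝ, P x) :
    ∀ᵐ t : ℝ, P (c + A * t) := by
  rw [ae_iff] at h ⊢
  have heq : {t : ℝ | ¬ P (c + A * t)}
      = (fun t : ℝ => A * t) ⁻¹' ((fun x : ℝ => c + x) ⁻¹' {x | ¬ P x}) := rfl
  rw [heq, Real.volume_preimage_mul_left hA, measure_preimage_add, h, mul_zero]

lemma chain_ext (β : ℕ → ℝ) (lo hi : ℕ) (h : ∀ i, lo ≤ i → i+1 ≤ hi → β i ≤ β (i+1)) :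
    ∀ i j, lo ≤ i → i ≤ j → j ≤ hi → β i ≤ β j := by
  intro i j hlo hij hhi
  induction j with
  | zero =>
    have hi0 : i = 0 := by omega
    subst hi0; exact le_rfl
  | succ j ih =>
    rcases Nat.eq_or_lt_of_le hij with he | hlt
    · rw [he]
    · exact (ih (by omega) (by omega)).trans (h j (by omega) hhi)

lemma affine_image_Ioo {R A : ℝ} (hA : 0 < A) (u v : ℝ) :
    (fun t : ℝ => R - A * t) '' Set.Ioo u v = Set.Ioo (R - A * v) (R - A * u) := by
  ext y
  constructor
  · rintro ⟨t, ⟨h1, h2⟩, rfl⟩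
    dsimp only
    constructor <;> nlinarith
  · rintro ⟨h1, h2⟩
    refine ⟨(R - y) / A, ⟨?_, ?_⟩, by field_simp; ring⟩
    · rw [lt_div_iff₀ hA]; nlinarith
    · rw [div_lt_iff₀ hA]; nlinarith

lemma affine_image_Icc {R A : ℝ} (hA : 0 < A) (u v : ℝ) (huv : u ≤ v) :
    (fun t : ℝ => R - A * t) '' Set.Icc u v = Set.Icc (R - A * v) (R - A * u) := by
  ext y
  constructor
  · rintro ⟨t, ⟨h1, h2⟩, rfl⟩
    dsimp only
    constructor <;> nlinarith
  · rintro ⟨h1, h2⟩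
    refine ⟨(R - y) / A, ⟨?_, ?_⟩, by field_simp; ring⟩
    · rw [le_div_iff₀ hA]; nlinarith
    · rw [div_le_iff₀ hA]; nlinarith

set_option maxHeartbeats 1000000 in
/-- monotonicity criterion for a nonconstant fixed point of the
orientation-reversing-at-`k̂` similarity operator of zero spectral order, `1 < k̂ < n`. -/
theorem selfSimilarRev_zeroOrder_monotone_iff_mid
    (n : ℕ) (hn : 1 < n) (a d β : ℕ → ℝ)
    (ha : ∀ k ∈ Finset.Icc 1 n, 0 < a k)
    (hsum : ∑ k ∈ Finset.Icc 1 n, a k = 1)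
    (p : ℝ≥0∞) (hp1 : 1 ≤ p) (hpt : p ≠ ⊤)
    (khat : ℕ) (hk : khat ∈ Finset.Icc 1 n)
    (hdk : d khat ≠ 0)
    (hd0 : ∀ k ∈ Finset.Icc 1 n, k ≠ khat → d k = 0)
    (hβ : ∃ k ∈ Finset.Icc 1 n, β k ≠ 0)
    (hcontr : a khat * |d khat| ^ p.toReal < 1)
    (f : ℝ → ℝ) (hf : MemLp f p (volume.restrict (Set.Icc (0:ℝ) 1)))
    (hfix : f =ᵐ[volume.restrict (Set.Icc (0:ℝ) 1)] simOpRev n khat a d β f)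
    (hk1 : 1 < khat) (hkn : khat < n)
    (hnc : ¬ ∃ c : ℝ, f =ᵐ[volume.restrict (Set.Icc (0:ℝ) 1)] (fun _ => c)) :
    (∃ g : ℝ → ℝ, MonotoneOn g (Set.Icc (0:ℝ) 1) ∧
        f =ᵐ[volume.restrict (Set.Icc (0:ℝ) 1)] g) ↔
      (d khat < 0 ∧
       (∀ i : ℕ, 1 ≤ i → i + 1 ≤ khat - 1 → β i ≤ β (i + 1)) ∧
       β (khat - 1) ≤ d khat * β n + β khat ∧
       d khat * β n + β khat ≤ d khat * β 1 + β khat ∧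
       d khat * β 1 + β khat ≤ β (khat + 1) ∧
       (∀ i : ℕ, khat + 1 ≤ i → i + 1 ≤ n → β i ≤ β (i + 1))) := by
  classical
  simp only [Finset.mem_Icc] at hk
  obtain ⟨hk1n, hknn⟩ := hk
  set α : ℕ → ℝ := alphaOf a with hαdef
  set A : ℝ := a khat with hAdef
  set dd : ℝ := d khat with hdddef
  set b : ℝ := β khat with hbdef
  set R : ℝ := α (khat + 1) with hRdef
  have hadd : ∀ i j, 1 ≤ i → i ≤ j → α j = α i + ∑ t ∈ Finset.Ico i j, a t := by
    intro i j h1 h2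
    rw [hαdef]
    show (∑ t ∈ Finset.Ico 1 j, a t) = (∑ t ∈ Finset.Ico 1 i, a t) + _
    rw [Finset.sum_Ico_consecutive _ h1 h2]
  have hmonoα : ∀ i j, 1 ≤ i → i ≤ j → j ≤ n+1 → α i ≤ α j := by
    intro i j h1 h2 h3
    rw [hadd i j h1 h2]
    have h0 : 0 ≤ ∑ t ∈ Finset.Ico i j, a t := by
      apply Finset.sum_nonneg
      intro t ht
      simp only [Finset.mem_Ico] at ht
      exact (ha t (Finset.mem_Icc.mpr ⟨by omega, by omega⟩)).le
    linarith
  have hstrictα : ∀ i j, 1 ≤ i → i < j → j ≤ n+1 → α i < α j := by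
    intro i j h1 h2 h3
    rw [hadd i j h1 h2.le]
    have h0 : 0 < ∑ t ∈ Finset.Ico i j, a t := by
      apply Finset.sum_pos
      · intro t ht
        simp only [Finset.mem_Ico] at ht
        exact ha t (Finset.mem_Icc.mpr ⟨by omega, by omega⟩)
      · exact ⟨i, Finset.mem_Ico.mpr ⟨le_rfl, h2⟩⟩
    linarith
  have hα1 : α 1 = 0 := by simp [hαdef, alphaOf]
  have hαtop : α (n+1) = 1 := by
    rw [hαdef]
    show (∑ t ∈ Finset.Ico 1 (n+1), a t) = 1
    rw [Finset.Ico_add_one_right_eq_Icc]; exact hsum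
  have hA : 0 < A := ha khat (Finset.mem_Icc.mpr ⟨hk1n, hknn⟩)
  have hL : α khat = R - A := by
    have := hadd khat (khat+1) (by omega) (by omega)
    rw [Finset.sum_Ico_succ_top (le_refl khat), Finset.Ico_self, Finset.sum_empty] at this
    rw [hRdef, this]; ring
  have hdata : SSData n khat α R A :=
    ⟨hA, hmonoα, hstrictα, hα1, hαtop, by omega, by omega, rfl, hL⟩
  have hA1 : A < 1 := by
    have h2k : α 2 ≤ α khat := hmonoα 2 khat (by omega) (by omega) (by omega)
    have h12 : α 1 < α 2 := hstrictα 1 2 le_rfl one_lt_two (by omega)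
    have hR1 : R ≤ 1 := hdata.R_le_one
    rw [hα1] at h12
    linarith [hL]
  -- fixed point extraction
  have hfix' : ∀ᵐ x : ℝ, x ∈ Set.Icc (0:ℝ) 1 → f x = simOpRev n khat a d β f x :=
    (ae_restrict_iff' measurableSet_Icc).mp hfix
  have hsub01 : ∀ k, 1 ≤ k → k ≤ n → Set.Ioo (α k) (α (k+1)) ⊆ Set.Icc (0:ℝ) 1 := by
    intro k h1 h2 x hx
    have e0 : (0:ℝ) ≤ α k := by
      have := hmonoα 1 k le_rfl h1 (by omega); rw [hα1] at this; exact this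
    have e1 : α (k+1) ≤ 1 := by
      have := hmonoα (k+1) (n+1) (by omega) (by omega) le_rfl; rw [hαtop] at this; exact this
    exact ⟨le_of_lt (lt_of_le_of_lt e0 hx.1), le_of_lt (lt_of_lt_of_le hx.2 e1)⟩
  have heval : ∀ k, 1 ≤ k → k ≤ n → ∀ x ∈ Set.Ioo (α k) (α (k+1)),
      simOpRev n khat a d β f x =
        (if k = khat then β k + d k * f ((α (k+1) - x) / a k)
          else β k + d k * f ((x - α k) / a k)) := by
    intro k h1 h2 x hx
    show (∑ j ∈ Finset.Icc 1 n, Set.indicator _ _ x) = _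
    rw [Finset.sum_eq_single_of_mem k (Finset.mem_Icc.mpr ⟨h1, h2⟩)]
    · rw [← hαdef] at *
      exact Set.indicator_of_mem hx _
    · intro j hj hjk
      simp only [Finset.mem_Icc] at hj
      apply Set.indicator_of_notMem
      rw [← hαdef]
      intro hmem
      rcases Nat.lt_or_ge j k with hc | hc
      · have : α (j+1) ≤ α k := hmonoα (j+1) k (by omega) (by omega) (by omega)
        have := hmem.2
        have := hx.1
        linarith
      · have hjk' : k < j := by omega
        have : α (k+1) ≤ α j := hmonoα (k+1) j (by omega) (by omega) (by omega)
        have := hmem.1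
        have := hx.2
        linarith
  have heval1 : ∀ k, 1 ≤ k → k ≤ n → k ≠ khat →
      ∀ᵐ x : ℝ, x ∈ Set.Ioo (α k) (α (k+1)) → f x = β k := by
    intro k h1 h2 hne
    filter_upwards [hfix'] with x hx hmem
    rw [hx (hsub01 k h1 h2 hmem), heval k h1 h2 x hmem, if_neg hne,
      hd0 k (Finset.mem_Icc.mpr ⟨h1, h2⟩) hne]
    ring
  have hkhrel : ∀ᵐ x : ℝ, x ∈ Set.Ioo (α khat) R → f x = b + dd * f ((R - x) / A) := by
    filter_upwards [hfix'] with x hx hmem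
    have hmem' : x ∈ Set.Ioo (α khat) (α (khat+1)) := by rw [← hRdef]; exact hmem
    rw [hx (hsub01 khat hk1n hknn hmem'), heval khat hk1n hknn x hmem', if_pos rfl]
  -- level claims
  have hlev : ∀ (m k : ℕ), ssValid n khat k →
      ∀ᵐ x : ℝ, x ∈ Set.Ioo (ssPiece R A α m k).1 (ssPiece R A α m k).2 →
        f x = ssVal b dd β m k := by
    intro m
    induction m with
    | zero =>
      intro k hv
      filter_upwards [heval1 k hv.1 hv.2.1 hv.2.2] with x hx hmem
      exact hx hmem
    | succ m ih =>
      intro k hv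
      have hIH := ih k hv
      have hAne : (-(1/A) : ℝ) ≠ 0 := by
        have := hA.ne'
        simp only [ne_eq, neg_eq_zero, one_div, inv_eq_zero]
        exact this
      have htrans := ae_comp_affine (P := fun y =>
        y ∈ Set.Ioo (ssPiece R A α m k).1 (ssPiece R A α m k).2 → f y = ssVal b dd β m k)
        (R/A) (-(1/A)) hAne hIH
      filter_upwards [htrans, hkhrel] with x h1 h2 hmem
      obtain ⟨hx1, hx2⟩ := hmem
      have hbnd := hdata.ss_bounds m k hv.1 hv.2.1
      have hinner := hdata.ss_inner m k hv.1 hv.2.1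
      have hxL : α khat < x := lt_of_le_of_lt hinner.1 hx1
      have hxR : x < R := lt_of_lt_of_le hx2 hinner.2
      have hy : R/A + (-(1/A)) * x = (R - x)/A := by ring
      have hsx1 : R - A * (ssPiece R A α m k).2 < x := hx1
      have hsx2 : x < R - A * (ssPiece R A α m k).1 := hx2
      have hψ : (R - x)/A ∈ Set.Ioo (ssPiece R A α m k).1 (ssPiece R A α m k).2 := by
        constructor
        · rw [lt_div_iff₀ hA]; nlinarith
        · rw [div_lt_iff₀ hA]; nlinarith
      rw [h2 ⟨hxL, hxR⟩]
      rw [hy] at h1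
      rw [h1 hψ]
      rfl
  -- comparison from monotonicity
  have hIccvol : volume.restrict (Set.Icc (0:ℝ) 1) ≠ 0 := by
    intro h0
    have h1 := congrArg (fun μ : Measure ℝ => μ Set.univ) h0
    simp only [Measure.restrict_apply_univ, Real.volume_Icc, Measure.coe_zero,
      Pi.zero_apply, sub_zero, ENNReal.ofReal_one] at h1
    exact one_ne_zero h1
  constructor
  · rintro ⟨g, hg, hfg⟩
    have hfg' : ∀ᵐ x : ℝ, x ∈ Set.Icc (0:ℝ) 1 → f x = g x :=
      (ae_restrict_iff' measurableSet_Icc).mp hfg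
    have hget : ∀ (mm kk : ℕ), ssValid n khat kk →
        ∃ x, x ∈ Set.Ioo (ssPiece R A α mm kk).1 (ssPiece R A α mm kk).2 ∧
          g x = ssVal b dd β mm kk ∧ x ∈ Set.Icc (0:ℝ) 1 := by
      intro mm kk hvv
      have hbb := hdata.ss_bounds mm kk hvv.1 hvv.2.1
      have hsubI : Set.Ioo (ssPiece R A α mm kk).1 (ssPiece R A α mm kk).2 ⊆
          Set.Icc (0:ℝ) 1 := fun x hx => ⟨hbb.1.trans hx.1.le, hx.2.le.trans hbb.2.1⟩
      have hae := (hlev mm kk hvv).and hfg'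
      have hpos : volume (Set.Ioo (ssPiece R A α mm kk).1 (ssPiece R A α mm kk).2) ≠ 0 := by
        rw [Real.volume_Ioo]
        exact (ENNReal.ofReal_pos.mpr (by linarith [hbb.2.2])).ne'
      by_contra hno
      push_neg at hno
      apply hpos
      rw [Filter.eventually_iff, mem_ae_iff] at hae
      apply measure_mono_null _ hae
      intro x hx
      simp only [Set.mem_compl_iff, Set.mem_setOf_eq]
      intro hc
      have hxI := hsubI hx
      have e1 := hc.1 hx
      have e2 := hc.2 hxI
      exact hno x hx (by rw [← e2, e1]) hxI
    have hcmp : ∀ m k m' k', ssValid n khat k → ssValid n khat k' →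
        (ssPiece R A α m k).2 ≤ (ssPiece R A α m' k').1 →
        ssVal b dd β m k ≤ ssVal b dd β m' k' := by
      intro m k m' k' hv hv' hsep
      obtain ⟨x1, hx1, hg1, hi1⟩ := hget m k hv
      obtain ⟨x2, hx2, hg2, hi2⟩ := hget m' k' hv'
      have hx12 : x1 ≤ x2 := by
        have := hx1.2
        have := hx2.1
        linarith
      rw [← hg1, ← hg2]
      exact hg hi1 hi2 hx12
    -- first: dd < 0
    have hddlt : dd < 0 := by
      rcases lt_trichotomy dd 0 with hc | hc | hc
      · exact hc
      · exact absurd hc hdk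
      · -- dd > 0 : contradiction with nonconstancy
        exfalso
        apply hnc
        have hAne : (-A : ℝ) ≠ 0 := neg_ne_zero.mpr hA.ne'
        have t1 := ae_comp_affine (P := fun x =>
          x ∈ Set.Ioo (α khat) R → f x = b + dd * f ((R - x) / A)) R (-A) hAne hkhrel
        have t2 := ae_comp_affine (P := fun x =>
          x ∈ Set.Icc (0:ℝ) 1 → f x = g x) R (-A) hAne hfg'
        have hLnn := hdata.L_nonneg
        have hRle := hdata.R_le_one
        have key : ∀ᵐ x : ℝ, x ∈ Set.Ioo (0:ℝ) 1 → f x = (g (R - A * x) - b) / dd := by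
          filter_upwards [t1, t2] with x h1 h2 hx
          have hφmem : R + -A * x ∈ Set.Ioo (α khat) R := by
            constructor
            · rw [hL]; nlinarith [hx.2]
            · nlinarith [hx.1]
          have hφI : R + -A * x ∈ Set.Icc (0:ℝ) 1 := by
            constructor
            · have := hφmem.1; linarith
            · have := hφmem.2; linarith
          have e1 := h1 hφmem
          have e2 : (R - (R + -A * x)) / A = x := by field_simp; ring
          rw [e2] at e1
          have e3 := h2 hφI
          have e4 : g (R + -A * x) = b + dd * f x := by rw [← e3, e1]
          have e5 : R - A * x = R + -A * x := by ring
          rw [e5, e4]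
          field_simp; ring
        have hIoo : ∀ᵐ x ∂volume.restrict (Set.Icc (0:ℝ) 1), x ∈ Set.Ioo (0:ℝ) 1 := by
          rw [ae_restrict_iff' measurableSet_Icc, ae_iff]
          refine measure_mono_null ?_
            (((Set.finite_singleton (1:ℝ)).insert 0).measure_zero _)
          · intro x hx
            simp only [Set.mem_setOf_eq, not_forall, Set.mem_Icc, Set.mem_Ioo] at hx
            obtain ⟨⟨u1, u2⟩, hu⟩ := hx
            simp only [Set.mem_insert_iff, Set.mem_singleton_iff]
            rcases eq_or_lt_of_le u1 with h | h
            · left; exact h.symm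
            · right
              rcases eq_or_lt_of_le u2 with h' | h'
              · exact h'
              · exact absurd ⟨h, h'⟩ hu
        have hres : ∀ᵐ x ∂volume.restrict (Set.Icc (0:ℝ) 1),
            f x = g x ∧ f x = (g (R - A * x) - b) / dd ∧ x ∈ Set.Icc (0:ℝ) 1 := by
          filter_upwards [ae_restrict_of_ae key, ae_restrict_of_ae hfg', hIoo,
            ae_restrict_mem measurableSet_Icc] with x k1 k2 k3 k4
          exact ⟨k2 k4, k1 k3, k4⟩
        haveI : (ae (volume.restrict (Set.Icc (0:ℝ) 1))).NeBot := ae_neBot.mpr hIccvol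
        obtain ⟨x0, e10, e20, e30⟩ := hres.exists
        refine ⟨g x0, ?_⟩
        filter_upwards [hres] with x hx
        obtain ⟨e1, e2, e3⟩ := hx
        have hφmemx : R - A * x ∈ Set.Icc (0:ℝ) 1 := by
          constructor
          · have h1 := e3.2; rw [hL] at hLnn; nlinarith
          · have h1 := e3.1; nlinarith
        have hφmemx0 : R - A * x0 ∈ Set.Icc (0:ℝ) 1 := by
          constructor
          · have h1 := e30.2; rw [hL] at hLnn; nlinarith
          · have h1 := e30.1; nlinarith
        have hgg : g x = g x0 := by
          rcases le_total x x0 with hle | hle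
          · refine le_antisymm (hg e3 e30 hle) ?_
            have hmono2 : g (R - A * x0) ≤ g (R - A * x) :=
              hg hφmemx0 hφmemx (by nlinarith)
            have h6 : f x0 * dd ≤ f x * dd := by
              rw [e2, e20, div_mul_cancel₀ _ hc.ne', div_mul_cancel₀ _ hc.ne']
              linarith
            have h7 := le_of_mul_le_mul_right h6 hc
            rw [e1, e10] at h7
            exact h7
          · refine le_antisymm ?_ (hg e30 e3 hle)
            have hmono2 : g (R - A * x) ≤ g (R - A * x0) :=
              hg hφmemx hφmemx0 (by nlinarith)
            have h6 : f x * dd ≤ f x0 * dd := by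
              rw [e2, e20, div_mul_cancel₀ _ hc.ne', div_mul_cancel₀ _ hc.ne']
              linarith
            have h7 := le_of_mul_le_mul_right h6 hc
            rw [e1, e10] at h7
            exact h7
        rw [← e1] at hgg
        exact hgg
    refine ⟨hddlt, ?_, ?_, ?_, ?_, ?_⟩
    · intro i hi1 hi2
      have := hcmp 0 i 0 (i+1) ⟨hi1, by omega, by omega⟩ ⟨by omega, by omega, by omega⟩
        (le_of_eq rfl)
      simpa [ssVal] using this
    · have hkk1 : khat - 1 + 1 = khat := by omega
      have hgeo : (ssPiece R A α 0 (khat-1)).2 ≤ (ssPiece R A α 1 n).1 := by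
        show α (khat - 1 + 1) ≤ R - A * (ssPiece R A α 0 n).2
        rw [hkk1]
        show α khat ≤ R - A * α (n+1)
        rw [hαtop, hL]; ring_nf; exact le_rfl
      have := hcmp 0 (khat-1) 1 n ⟨by omega, by omega, by omega⟩ ⟨by omega, le_rfl, by omega⟩ hgeo
      simp only [ssVal] at this
      linarith
    · have hgeo : (ssPiece R A α 1 n).2 ≤ (ssPiece R A α 1 1).1 := by
        show R - A * (ssPiece R A α 0 n).1 ≤ R - A * (ssPiece R A α 0 1).2
        show R - A * α n ≤ R - A * α 2
        have := hmonoα 2 n (by omega) (by omega) (by omega)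
        nlinarith
      have := hcmp 1 n 1 1 ⟨by omega, le_rfl, by omega⟩ ⟨by omega, by omega, by omega⟩ hgeo
      simp only [ssVal] at this
      linarith
    · have hgeo : (ssPiece R A α 1 1).2 ≤ (ssPiece R A α 0 (khat+1)).1 := by
        show R - A * (ssPiece R A α 0 1).1 ≤ α (khat+1)
        show R - A * α 1 ≤ α (khat+1)
        rw [hα1, hRdef]; ring_nf; exact le_rfl
      have := hcmp 1 1 0 (khat+1) ⟨by omega, by omega, by omega⟩
        ⟨by omega, by omega, by omega⟩ hgeo
      simp only [ssVal] at this
      linarith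
    · intro i hi1 hi2
      have := hcmp 0 i 0 (i+1) ⟨by omega, by omega, by omega⟩ ⟨by omega, by omega, by omega⟩
        (le_of_eq rfl)
      simpa [ssVal] using this
  · rintro ⟨hddlt, hcc1, hcc3, hcc4, hcc5, hcc2⟩
    have hord : SSOrd n khat β b dd :=
      ⟨hddlt, chain_ext β 1 (khat-1) hcc1, chain_ext β (khat+1) n hcc2,
        by linarith, by linarith, by linarith⟩
    have hkk2 : 2 ≤ khat := by omega
    have hkn2 : khat + 1 ≤ n := by omega
    set W : ℝ → Set ℝ := fun y => insert (β 1)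
      {w | ∃ m k, ssValid n khat k ∧ (ssPiece R A α m k).1 < y ∧ w = ssVal b dd β m k}
      with hWdef
    have hWne : ∀ y, (W y).Nonempty := fun y => ⟨β 1, Set.mem_insert _ _⟩
    have hβ1n : β 1 ≤ β n :=
      (ss_glb hord hkk2 hkn2 0 1 ⟨le_rfl, by omega, by omega⟩).2
    have hWbdd : ∀ y, ∀ w ∈ W y, w ≤ β n := by
      intro y w hw
      rcases hw with rfl | ⟨m, k, hv, _, rfl⟩
      · exact hβ1n
      · exact (ss_glb hord hkk2 hkn2 m k hv).2
    set g : ℝ → ℝ := fun y => sSup (W y) with hgdef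
    have hWsub : ∀ {y y' : ℝ}, y ≤ y' → W y ⊆ W y' := by
      intro y y' hyy w hw
      rcases hw with rfl | ⟨m, k, hv, hlt, rfl⟩
      · exact Set.mem_insert _ _
      · exact Set.mem_insert_iff.mpr (Or.inr ⟨m, k, hv, lt_of_lt_of_le hlt hyy, rfl⟩)
    have hgmono : Monotone g := fun y y' hyy =>
      csSup_le_csSup ⟨β n, fun w hw => hWbdd y' w hw⟩ (hWne y) (hWsub hyy)
    have hgp : ∀ m k, ssValid n khat k →
        ∀ y ∈ Set.Ioo (ssPiece R A α m k).1 (ssPiece R A α m k).2,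
        g y = ssVal b dd β m k := by
      intro m k hv y hy
      apply le_antisymm
      · apply csSup_le (hWne y)
        intro w hw
        rcases hw with rfl | ⟨m', k', hv', hlt, rfl⟩
        · exact (ss_glb hord hkk2 hkn2 m k hv).1
        · by_cases hsame : m' = m ∧ k' = k
          · obtain ⟨rfl, rfl⟩ := hsame
            exact le_rfl
          · have hne : m' ≠ m ∨ k' ≠ k := by tauto
            rcases hdata.ss_tri (m' + m) m' m k' k rfl hv' hv hne with hsep | hsep
            · exact ss_vle hdata hord (m' + m) m' m k' k rfl hv' hv hsep
            · exfalso
              linarith [hy.2, hlt]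
      · apply le_csSup ⟨β n, fun w hw => hWbdd y w hw⟩
        exact Set.mem_insert_iff.mpr (Or.inr ⟨m, k, hv, hy.1, rfl⟩)
    set U : Set ℝ := ⋃ (m : ℕ) (k : ℕ) (_ : ssValid n khat k),
      Set.Ioo (ssPiece R A α m k).1 (ssPiece R A α m k).2 with hUdef
    set φfun : ℝ → ℝ := fun t => R - A * t with hφdef
    have hiter : ∀ m k, φfun^[m] '' Set.Ioo (α k) (α (k+1)) =
        Set.Ioo (ssPiece R A α m k).1 (ssPiece R A α m k).2 := by
      intro m k
      induction m with
      | zero => simp [ssPiece]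
      | succ m ih =>
        rw [Function.iterate_succ', Set.image_comp, ih]
        exact affine_image_Ioo hA _ _
    have hiterIcc : ∀ m : ℕ, ∃ u v : ℝ, φfun^[m] '' Set.Icc (0:ℝ) 1 = Set.Icc u v ∧
        v - u = A ^ m := by
      intro m
      induction m with
      | zero => exact ⟨0, 1, by simp, by simp⟩
      | succ m ih =>
        obtain ⟨u, v, heq, hd⟩ := ih
        refine ⟨R - A * v, R - A * u, ?_, by rw [pow_succ, ← hd]; ring⟩
        rw [Function.iterate_succ', Set.image_comp, heq, affine_image_Icc hA u v ?_]
        nlinarith [pow_pos hA m]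
    set K : Set ℝ := ⋂ m : ℕ, φfun^[m] '' Set.Icc (0:ℝ) 1 with hKdef
    set C : Set ℝ := Set.range (fun q : ℕ × ℕ => φfun^[q.1] (α q.2)) with hCdef
    have hKnull : volume K = 0 := by
      have hbound : ∀ m : ℕ, volume K ≤ ENNReal.ofReal (A ^ m) := by
        intro m
        obtain ⟨u, v, heq, hd⟩ := hiterIcc m
        calc volume K ≤ volume (φfun^[m] '' Set.Icc (0:ℝ) 1) :=
              measure_mono (Set.iInter_subset _ m)
          _ = ENNReal.ofReal (A ^ m) := by rw [heq, Real.volume_Icc, hd]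
      have htend : Filter.Tendsto (fun m : ℕ => ENNReal.ofReal (A ^ m))
          Filter.atTop (nhds 0) := by
        rw [show (0:ℝ≥0∞) = ENNReal.ofReal 0 by simp]
        exact ENNReal.tendsto_ofReal
          (tendsto_pow_atTop_nhds_zero_of_lt_one hA.le hA1)
      exact le_antisymm (ge_of_tendsto htend (Filter.Eventually.of_forall hbound)) zero_le
    have hCnull : volume C = 0 := (Set.countable_range _).measure_zero _
    have hfind : ∀ t : ℝ, t ∈ Set.Ioo (0:ℝ) 1 → (∀ j, t ≠ α j) →
        ∃ k, 1 ≤ k ∧ k ≤ n ∧ t ∈ Set.Ioo (α k) (α (k+1)) := by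
      intro t ht hne
      have hs1 : 1 ∈ (Finset.Icc 1 n).filter (fun j => α j < t) := by
        rw [Finset.mem_filter]
        exact ⟨Finset.mem_Icc.mpr ⟨le_rfl, by omega⟩, by rw [hα1]; exact ht.1⟩
      have hsne : ((Finset.Icc 1 n).filter (fun j => α j < t)).Nonempty := ⟨1, hs1⟩
      set k := ((Finset.Icc 1 n).filter (fun j => α j < t)).max' hsne with hkdef
      have hks := Finset.max'_mem _ hsne
      rw [← hkdef, Finset.mem_filter, Finset.mem_Icc] at hks
      refine ⟨k, hks.1.1, hks.1.2, hks.2, ?_⟩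
      rcases Nat.eq_or_lt_of_le hks.1.2 with he | hlt2
      · rw [he, hαtop]; exact ht.2
      · have hnotmem : k + 1 ∉ (Finset.Icc 1 n).filter (fun j => α j < t) := by
          intro hmem
          have := Finset.le_max' _ (k+1) hmem
          rw [← hkdef] at this
          omega
        rw [Finset.mem_filter, Finset.mem_Icc] at hnotmem
        push_neg at hnotmem
        have hle : t ≤ α (k+1) := hnotmem ⟨by omega, by omega⟩
        exact lt_of_le_of_ne hle (hne (k+1))
    have hcover : Set.Icc (0:ℝ) 1 \ U ⊆ C ∪ K := by
      intro x hx
      by_cases hxC : x ∈ C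
      · exact Or.inl hxC
      right
      have hmain : ∀ m : ℕ, x ∈ φfun^[m] '' Set.Ioo (0:ℝ) 1 := by
        intro m
        induction m with
        | zero =>
          simp only [Function.iterate_zero, Set.image_id]
          obtain ⟨hx0, hx1⟩ := hx.1
          constructor
          · rcases eq_or_lt_of_le hx0 with he | h
            · exfalso
              exact hxC ⟨(0, 1), by simp [hα1, ← he]⟩
            · exact h
          · rcases eq_or_lt_of_le hx1 with he | h
            · exfalso
              exact hxC ⟨(0, n+1), by simp [hαtop, he]⟩
            · exact h
        | succ m ih =>
          obtain ⟨t, ht, hteq⟩ := ih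
          have htne : ∀ j, t ≠ α j := by
            intro j he
            exact hxC ⟨(m, j), by show φfun^[m] (α j) = x; rw [← he]; exact hteq⟩
          obtain ⟨k, hk1, hk2, hkt⟩ := hfind t ht htne
          by_cases hkk : k = khat
          · subst hkk
            have htmem : t ∈ φfun '' Set.Ioo (0:ℝ) 1 := by
              rw [show φfun '' Set.Ioo (0:ℝ) 1 = Set.Ioo (R - A*1) (R - A*0) from
                affine_image_Ioo hA 0 1]
              constructor
              · have := hkt.1
                rw [hL] at this
                linarith
              · have := hkt.2
                rw [← hRdef] at this
                linarith
            obtain ⟨s', hs', hs'eq⟩ := htmem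
            exact ⟨s', hs', by rw [Function.iterate_succ_apply, hs'eq]; exact hteq⟩
          · exfalso
            apply hx.2
            rw [hUdef]
            refine Set.mem_iUnion.mpr ⟨m, Set.mem_iUnion.mpr ⟨k,
              Set.mem_iUnion.mpr ⟨⟨hk1, hk2, hkk⟩, ?_⟩⟩⟩
            rw [← hiter m k]
            exact ⟨t, hkt, hteq⟩
      rw [hKdef, Set.mem_iInter]
      intro m
      exact Set.image_mono Set.Ioo_subset_Icc_self (hmain m)
    refine ⟨g, hgmono.monotoneOn _, ?_⟩
    have hg1 : ∀ᵐ x : ℝ, ∀ (m k : ℕ), ssValid n khat k →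
        (x ∈ Set.Ioo (ssPiece R A α m k).1 (ssPiece R A α m k).2 → f x = g x) := by
      rw [ae_all_iff]
      intro m
      rw [ae_all_iff]
      intro k
      by_cases hv : ssValid n khat k
      · filter_upwards [hlev m k hv] with x hx _ hmem
        rw [hx hmem, hgp m k hv x hmem]
      · exact Filter.Eventually.of_forall fun x hv' => absurd hv' hv
    have hnullbad : volume (Set.Icc (0:ℝ) 1 \ U) = 0 :=
      measure_mono_null hcover (measure_union_null hCnull hKnull)
    have h1 : ∀ᵐ x ∂volume.restrict (Set.Icc (0:ℝ) 1), x ∉ Set.Icc (0:ℝ) 1 \ U :=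
      ae_restrict_of_ae (measure_eq_zero_iff_ae_notMem.mp hnullbad)
    filter_upwards [h1, ae_restrict_mem measurableSet_Icc, ae_restrict_of_ae hg1]
      with x hx1 hx2 hx3
    have hxU : x ∈ U := by
      by_contra hc
      exact hx1 ⟨hx2, hc⟩
    rw [hUdef] at hxU
    simp only [Set.mem_iUnion] at hxU
    obtain ⟨m, k, hv, hmem⟩ := hxU
    exact hx3 m k hv hmem
end
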